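/- For every integer g ≥ 2, the first subleading Harer–Zagier coefficient satisfies b(g, g−2) = (3/10) · g·(g−1)/(2g−1) · b(g, g−1). -/

import Mathlib

/-- For every `g ≥ 2`, `b g (g-2) = (3/10) * g*(g-1)/(2g-1) * b g (g-1)`. -/
theorem harer_zagier_subleading_ratio
    (b : ℕ → ℤ → ℚ)
    (hb1 : b 1 0 = 1)
    (hb0 : ∀ g : ℕ, 1 ≤ g → ∀ k : ℤ, (k < 0 ∨ (g : ℤ) - 1 < k) → b g k = 0)
    (hrec : ∀ g : ℕ, 1 ≤ g → ∀ k : ℤ,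
      (4 * (g : ℚ) + 2 * (k : ℚ) + 6) * b (g + 1) k =
        (4 * (g : ℚ) + 2 * (k : ℚ) + 1) * (4 * (g : ℚ) + 2 * (k : ℚ) + 3) *
          ((4 * (g : ℚ) + 2 * (k : ℚ) + 2) * b g k
            + 4 * (4 * (g : ℚ) + 2 * (k : ℚ) - 1) * b g (k - 1))) :
    ∀ g : ℕ, 2 ≤ g →
      b g ((g : ℤ) - 2) =
        (3 / 10 : ℚ) * ((g : ℚ) * ((g : ℚ) - 1) / (2 * (g : ℚ) - 1)) *
          b g ((g : ℤ) - 1) := by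
  intro g hg
  induction g, hg using Nat.le_induction with
  | base =>
      have h11 : b 1 1 = 0 := hb0 1 le_rfl 1 (Or.inr (by norm_num))
      have h1m : b 1 (-1) = 0 := hb0 1 le_rfl (-1) (Or.inl (by norm_num))
      have hA := hrec 1 le_rfl 1
      have hB := hrec 1 le_rfl 0
      push_cast at hA hB
      rw [h11, hb1] at hA
      rw [hb1, h1m] at hB
      have hA' : b 2 1 = 105 := by linarith
      have hB' : b 2 0 = 21 := by linarith
      norm_num
      rw [hA', hB']
      norm_num
  | succ g hg ih =>
      have hx2 : (2 : ℚ) ≤ (g : ℚ) := by exact_mod_cast hg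
      have h0 : b g (g : ℤ) = 0 := hb0 g (by omega) (g : ℤ) (Or.inr (by omega))
      have h1 := hrec g (by omega) (g : ℤ)
      have h2 := hrec g (by omega) ((g : ℤ) - 1)
      push_cast at h1 h2
      rw [h0] at h1
      have hgm : ((g : ℤ) - 1 - 1) = (g : ℤ) - 2 := by ring
      rw [hgm] at h2
      have hd3 : (2 * (g : ℚ) - 1) ≠ 0 := by nlinarith
      have hd4 : (2 * (g : ℚ) + 1) ≠ 0 := by nlinarith
      have hne : ((6 * (g : ℚ) + 4) * (6 * (g : ℚ) + 6) * (2 * (g : ℚ) - 1)) ≠ 0 :=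
        mul_ne_zero (mul_ne_zero (by nlinarith) (by nlinarith)) hd3
      have ih' : (2 * (g : ℚ) - 1) * b g ((g : ℤ) - 2)
          = 3 / 10 * (g : ℚ) * ((g : ℚ) - 1) * b g ((g : ℤ) - 1) := by
        rw [ih]
        field_simp
      have key : ((6 * (g : ℚ) + 4) * (6 * (g : ℚ) + 6) * (2 * (g : ℚ) - 1)) *
            ((2 * (g : ℚ) + 1) * b (g + 1) ((g : ℤ) - 1)) =
          ((6 * (g : ℚ) + 4) * (6 * (g : ℚ) + 6) * (2 * (g : ℚ) - 1)) *
            (3 / 10 * ((g : ℚ) + 1) * (g : ℚ) * b (g + 1) (g : ℤ)) := by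
        linear_combination
          ((6 * (g : ℚ) + 6) * (2 * (g : ℚ) - 1) * (2 * (g : ℚ) + 1)) * h2
          + (-(3 / 10) * ((g : ℚ) + 1) * (g : ℚ) * (6 * (g : ℚ) + 4) * (2 * (g : ℚ) - 1)) * h1
          + ((6 * (g : ℚ) + 6) * (2 * (g : ℚ) + 1) * (6 * (g : ℚ) - 1) * (6 * (g : ℚ) + 1)
              * 4 * (6 * (g : ℚ) - 3)) * ih'
      have key' : (2 * (g : ℚ) + 1) * b (g + 1) ((g : ℤ) - 1)
          = 3 / 10 * ((g : ℚ) + 1) * (g : ℚ) * b (g + 1) (g : ℤ) :=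
        mul_left_cancel₀ hne key
      have hg1 : ((g + 1 : ℕ) : ℤ) - 2 = (g : ℤ) - 1 := by push_cast; ring
      have hg2 : ((g + 1 : ℕ) : ℤ) - 1 = (g : ℤ) := by push_cast; ring
      rw [hg1, hg2]
      push_cast
      have hd5 : (2 * ((g : ℚ) + 1) - 1) ≠ 0 := by linarith
      rw [show (2 * ((g : ℚ) + 1) - 1) = 2 * (g : ℚ) + 1 by ring]
      field_simp
      linear_combination 10 * key'
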